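/- If a graph H is topologically contained in a graph G, then the line graph L(H) is a minor of the line graph L(G). -/

import Mathlib

open SimpleGraph


private lemma induce_subsingleton_connected {α : Type*} (G' : SimpleGraph α) {s : Set α}
    (hne : s.Nonempty) (hsub : s.Subsingleton) : (G'.induce s).Connected := by
  have : Nonempty s := hne.to_subtype
  refine ⟨fun a b => ?_⟩
  have : a = b := Subtype.ext (hsub a.2 b.2)
  rw [this]

private lemma exists_edge_of_mem_support {V : Type*} {G : SimpleGraph V} :
    ∀ {x y : V} (p : G.Walk x y), ¬ p.Nil → ∀ z ∈ p.support, ∃ e ∈ p.edges, z ∈ e := by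
  intro x y p
  induction p with
  | nil => intro hn; simp at hn
  | @cons x b y h q ih =>
    intro _ z hz
    rw [SimpleGraph.Walk.support_cons, List.mem_cons] at hz
    rcases hz with rfl | hz
    · exact ⟨s(z, b), by simp, by simp⟩
    · cases q with
      | nil =>
        simp only [SimpleGraph.Walk.support_nil, List.mem_singleton] at hz
        subst hz
        exact ⟨s(x, z), by simp, by simp⟩
      | cons h' r =>
        obtain ⟨e, he, hze⟩ := ih (by simp) z hz
        exact ⟨e, by rw [SimpleGraph.Walk.edges_cons]; exact List.mem_cons_of_mem _ he, hze⟩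

private lemma line_conn {V : Type*} {G : SimpleGraph V} :
    ∀ {x y : V} (p : G.Walk x y), p.IsPath → ¬ p.Nil →
      (G.lineGraph.induce {a : G.edgeSet | (a : Sym2 V) ∈ p.edges}).Connected := by
  intro x y p
  induction p with
  | nil => intro _ hn; simp at hn
  | @cons x b y h q ih =>
    intro hp _
    cases q with
    | nil =>
      apply induce_subsingleton_connected
      · exact ⟨⟨s(x, b), h⟩, by simp⟩
      · rintro ⟨a, _⟩ ha ⟨c, _⟩ hc
        simp only [Set.mem_setOf_eq, SimpleGraph.Walk.edges_cons, SimpleGraph.Walk.edges_nil,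
          List.mem_singleton] at ha hc
        exact Subtype.ext (ha.trans hc.symm)
    | @cons b c y h' r =>
      have hq : ¬ (SimpleGraph.Walk.cons h' r).Nil := by simp
      have hqp : (SimpleGraph.Walk.cons h' r).IsPath := hp.of_cons
      have hxnot : s(x, b) ∉ (SimpleGraph.Walk.cons h' r).edges := by
        intro hmem
        exact ((SimpleGraph.Walk.cons_isPath_iff _ _).mp hp).2
          (SimpleGraph.Walk.fst_mem_support_of_mem_edges _ hmem)
      have hset : {a : G.edgeSet | (a : Sym2 V) ∈ (SimpleGraph.Walk.cons h (SimpleGraph.Walk.cons h' r)).edges}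
          = {a : G.edgeSet | (a : Sym2 V) = s(x, b)}
            ∪ {a : G.edgeSet | (a : Sym2 V) ∈ (SimpleGraph.Walk.cons h' r).edges} := by
        ext a
        simp [List.mem_cons]
      rw [hset]
      apply SimpleGraph.connected_induce_union
        (v := (⟨s(x, b), h⟩ : G.edgeSet))
        (w := (⟨s(b, c), h'⟩ : G.edgeSet))
      · exact (induce_subsingleton_connected _ ⟨⟨s(x, b), h⟩, by simp⟩
          (by rintro ⟨a, _⟩ ha ⟨d, _⟩ hd
              exact Subtype.ext (ha.trans hd.symm))).preconnected
      · exact (ih hqp hq).preconnected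
      · simp
      · simp
      · refine ⟨?_, ⟨b, by simp, by simp⟩⟩
        intro hcontra
        apply hxnot
        rw [Subtype.ext_iff] at hcontra
        simp only at hcontra
        rw [hcontra]
        simp

/-- `H` is a minor of `G`: there is a family of nonempty, pairwise disjoint,
connected branch sets in `G`, one for each vertex of `H`, such that adjacent
vertices of `H` have branch sets joined by an edge of `G`. -/
def SimpleGraph.IsMinorOf {W V : Type*} (H : SimpleGraph W) (G : SimpleGraph V) : Prop :=
  ∃ φ : W → Set V,
    (∀ w, (φ w).Nonempty) ∧
    (∀ w, (G.induce (φ w)).Connected) ∧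
    (Pairwise fun w₁ w₂ => Disjoint (φ w₁) (φ w₂)) ∧
    (∀ ⦃w₁ w₂⦄, H.Adj w₁ w₂ → ∃ a ∈ φ w₁, ∃ b ∈ φ w₂, G.Adj a b)

/-- `H` is topologically contained in `G`: some subgraph of `G` is a
subdivision of `H`. Concretely, there is an injection `φ` of the vertices of
`H` into `G` together with a family of paths of `G` representing the edges of
`H`, such that distinct paths meet only in common endpoints and the interior
of each path avoids the branch vertices. -/
def TopologicallyContained {W V : Type*} (H : SimpleGraph W) (G : SimpleGraph V) : Prop :=
  ∃ φ : W ↪ V, ∃ P : ∀ ⦃u v : W⦄, H.Adj u v → G.Walk (φ u) (φ v),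
    (∀ ⦃u v : W⦄ (h : H.Adj u v), (P h).IsPath) ∧
    (∀ ⦃u v : W⦄ (h : H.Adj u v) (w : W), φ w ∈ (P h).support → w = u ∨ w = v) ∧
    (∀ ⦃u v : W⦄ (h : H.Adj u v) ⦃u' v' : W⦄ (h' : H.Adj u' v'),
      s(u, v) ≠ s(u', v') → ∀ x, x ∈ (P h).support → x ∈ (P h').support →
        (x = φ u ∨ x = φ v) ∧ (x = φ u' ∨ x = φ v'))

theorem stmt4 {W V : Type*} (H : SimpleGraph W) (G : SimpleGraph V)
    (h : TopologicallyContained H G) :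
    H.lineGraph.IsMinorOf G.lineGraph := by
  obtain ⟨φ, P, hpath, hbranch, hdisj⟩ := h
  have key : ∀ e : H.edgeSet, ∃ p : W × W, H.Adj p.1 p.2 ∧ (e : Sym2 W) = s(p.1, p.2) := by
    rintro ⟨e, he⟩
    induction e using Sym2.ind with
    | _ u v => exact ⟨(u, v), he, rfl⟩
  choose pr hadj hrep using key
  have hnil : ∀ e : H.edgeSet, ¬ (P (hadj e)).Nil :=
    fun e => SimpleGraph.Walk.not_nil_of_ne (φ.injective.ne (hadj e).ne)
  have hdisj' : ∀ e f : H.edgeSet, e ≠ f → ∀ ed : Sym2 V,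
      ed ∈ (P (hadj e)).edges → ed ∈ (P (hadj f)).edges → False := by
    intro e f hef ed
    have hne' : s((pr e).1, (pr e).2) ≠ s((pr f).1, (pr f).2) := by
      rw [← hrep e, ← hrep f]
      exact fun hh => hef (Subtype.ext hh)
    induction ed using Sym2.ind with
    | _ x y =>
      intro hae haf
      have hGadj : G.Adj x y := SimpleGraph.Walk.adj_of_mem_edges _ hae
      have hxy : x ≠ y := hGadj.ne
      obtain ⟨hx1, hx2⟩ := hdisj (hadj e) (hadj f) hne' x
        (SimpleGraph.Walk.fst_mem_support_of_mem_edges _ hae)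
        (SimpleGraph.Walk.fst_mem_support_of_mem_edges _ haf)
      obtain ⟨hy1, hy2⟩ := hdisj (hadj e) (hadj f) hne' y
        (SimpleGraph.Walk.snd_mem_support_of_mem_edges _ hae)
        (SimpleGraph.Walk.snd_mem_support_of_mem_edges _ haf)
      have h1 : s(x, y) = s(φ (pr e).1, φ (pr e).2) := by
        rcases hx1 with rfl | rfl <;> rcases hy1 with h | h <;>
          first | exact absurd h hxy.symm | (subst h; first | rfl | exact Sym2.eq_swap)
      have h2 : s(x, y) = s(φ (pr f).1, φ (pr f).2) := by
        rcases hx2 with rfl | rfl <;> rcases hy2 with h | h <;>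
          first | exact absurd h hxy.symm | (subst h; first | rfl | exact Sym2.eq_swap)
      have h12 := h1.symm.trans h2
      rw [Sym2.eq_iff] at h12
      apply hne'
      rw [Sym2.eq_iff]
      rcases h12 with ⟨ha, hb⟩ | ⟨ha, hb⟩
      · exact Or.inl ⟨φ.injective ha, φ.injective hb⟩
      · exact Or.inr ⟨φ.injective ha, φ.injective hb⟩
  refine ⟨fun e => {a : G.edgeSet | (a : Sym2 V) ∈ (P (hadj e)).edges}, ?_, ?_, ?_, ?_⟩
  · intro e
    obtain ⟨ed, hed, _⟩ := exists_edge_of_mem_support (P (hadj e)) (hnil e) _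
      (SimpleGraph.Walk.start_mem_support _)
    exact ⟨⟨ed, (P (hadj e)).edges_subset_edgeSet hed⟩, hed⟩
  · exact fun e => line_conn _ (hpath _) (hnil e)
  · intro e f hef
    rw [Set.disjoint_left]
    intro a hae haf
    exact hdisj' e f hef a hae haf
  · intro e f hlg
    obtain ⟨hef, w, hwe, hwf⟩ := SimpleGraph.lineGraph_adj_iff_exists.mp hlg
    rw [hrep e, Sym2.mem_iff] at hwe
    rw [hrep f, Sym2.mem_iff] at hwf
    have hsup_e : φ w ∈ (P (hadj e)).support := by
      rcases hwe with rfl | rfl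
      · exact SimpleGraph.Walk.start_mem_support _
      · exact SimpleGraph.Walk.end_mem_support _
    have hsup_f : φ w ∈ (P (hadj f)).support := by
      rcases hwf with rfl | rfl
      · exact SimpleGraph.Walk.start_mem_support _
      · exact SimpleGraph.Walk.end_mem_support _
    obtain ⟨ed, hed, hwed⟩ := exists_edge_of_mem_support _ (hnil e) _ hsup_e
    obtain ⟨fd, hfd, hwfd⟩ := exists_edge_of_mem_support _ (hnil f) _ hsup_f
    refine ⟨⟨ed, (P (hadj e)).edges_subset_edgeSet hed⟩, hed,
      ⟨fd, (P (hadj f)).edges_subset_edgeSet hfd⟩, hfd, ?_⟩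
    refine SimpleGraph.lineGraph_adj_iff_exists.mpr ⟨?_, φ w, hwed, hwfd⟩
    intro hab
    have : ed = fd := congrArg Subtype.val hab
    subst this
    exact hdisj' e f hef ed hed hfd
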